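/- Suppose K is closed at infinity. Then for a degree d > 0, the interior of the cone P_d(K) of polynomials of degree at most d nonnegative on K equals {p ∈ ℝ[x]_d : p > 0 on K and the degree-d homogeneous part p^{(d)} is strictly positive on K^e}, where K^e = {x : c_i^hm(x)=0 (i∈E), c_j^hm(x)≥0 (j∈I), ‖x‖²=1} with c^hm the top-degree homogeneous part of c. -/

import Mathlib

open MvPolynomial

/-- Evaluation at `(x₀, x)` of the homogenization `p̃(x₀,x) = x₀^{deg p} p(x/x₀)` of `p`,
given by `∑_α p_α x₀^{deg p − |α|} x^α`. -/
noncomputable def homEval {n : ℕ} (p : MvPolynomial (Fin n) ℝ) (x₀ : ℝ) (x : Fin n → ℝ) : ℝ :=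
  ∑ α ∈ p.support, p.coeff α * x₀ ^ (p.totalDegree - α.sum fun _ e => e) * ∏ i, x i ^ α i

/-- The semialgebraic set `K = {x : c_i(x) = 0 (i ∈ E), c_j(x) ≥ 0 (j ∈ I)}`. -/
def semiSet {n : ℕ} {ι : Type*} (E I : Set ι) (g : ι → MvPolynomial (Fin n) ℝ) :
    Set (Fin n → ℝ) :=
  {x | (∀ i ∈ E, eval x (g i) = 0) ∧ (∀ j ∈ I, 0 ≤ eval x (g j))}

/-- The homogenized cone `K̃^c` with strictly positive `x₀`-coordinate. -/
def tildeC {n : ℕ} {ι : Type*} (E I : Set ι) (g : ι → MvPolynomial (Fin n) ℝ) :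
    Set (ℝ × (Fin n → ℝ)) :=
  {z | 0 < z.1 ∧ (∀ i ∈ E, homEval (g i) z.1 z.2 = 0) ∧ (∀ j ∈ I, 0 ≤ homEval (g j) z.1 z.2)}

/-- The homogenized cone `K̃^h` with nonnegative `x₀`-coordinate. -/
def tildeH {n : ℕ} {ι : Type*} (E I : Set ι) (g : ι → MvPolynomial (Fin n) ℝ) :
    Set (ℝ × (Fin n → ℝ)) :=
  {z | 0 ≤ z.1 ∧ (∀ i ∈ E, homEval (g i) z.1 z.2 = 0) ∧ (∀ j ∈ I, 0 ≤ homEval (g j) z.1 z.2)}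

/-- `K` is closed at infinity: `cl(K̃^c) = K̃^h`. -/
def closedAtInfty {n : ℕ} {ι : Type*} (E I : Set ι) (g : ι → MvPolynomial (Fin n) ℝ) : Prop :=
  closure (tildeC E I g) = tildeH E I g

/-- The compact homogenized set `K̃ = K̃^h ∩ {x₀² + ‖x‖² = 1}`. -/
def tildeK {n : ℕ} {ι : Type*} (E I : Set ι) (g : ι → MvPolynomial (Fin n) ℝ) :
    Set (ℝ × (Fin n → ℝ)) :=
  tildeH E I g ∩ {z | z.1 ^ 2 + ∑ i, z.2 i ^ 2 = 1}

/-- The monomial `x^α`. -/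
noncomputable def mono {n : ℕ} (α : Fin n → ℕ) (x : Fin n → ℝ) : ℝ := ∏ i, x i ^ α i

/-- The exponents of the monomials of total degree at most `d` in `n` variables. -/
def expSet (n d : ℕ) : Finset (Fin n → ℕ) :=
  (Fintype.piFinset fun _ : Fin n => Finset.range (d + 1)).filter fun α => ∑ i, α i ≤ d

/-- The polynomial in `ℝ[x]_d` with coefficient vector `c`. -/
noncomputable def polyD {n d : ℕ} (c : expSet n d → ℝ) (x : Fin n → ℝ) : ℝ :=
  ∑ α : expSet n d, c α * mono (α : Fin n → ℕ) x

/-- The degree-`d` homogeneous part `p^{(d)}` of the polynomial with coefficients `c`. -/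
noncomputable def topPartD {n d : ℕ} (c : expSet n d → ℝ) (x : Fin n → ℝ) : ℝ :=
  ∑ α : expSet n d,
    if (∑ i, (α : Fin n → ℕ) i) = d then c α * mono (α : Fin n → ℕ) x else 0

/-- The set `K^e` of directions at infinity: common zeros/nonnegativity of the top-degree
homogeneous parts of the constraints, on the unit sphere. -/
def dirSet {n : ℕ} {ι : Type*} (E I : Set ι) (g : ι → MvPolynomial (Fin n) ℝ) :
    Set (Fin n → ℝ) :=
  {x | (∀ i ∈ E, eval x (homogeneousComponent (g i).totalDegree (g i)) = 0) ∧
       (∀ j ∈ I, 0 ≤ eval x (homogeneousComponent (g j).totalDegree (g j))) ∧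
       ∑ i, x i ^ 2 = 1}

section Aux

variable {n d : ℕ} {ι : Type*}

noncomputable def Fh (n d : ℕ) (c : expSet n d → ℝ) (z : ℝ × (Fin n → ℝ)) : ℝ :=
  ∑ α : expSet n d, c α * z.1 ^ (d - ∑ i, (α : Fin n → ℕ) i) * mono (α : Fin n → ℕ) z.2

lemma expSet_sum_le (α : expSet n d) : ∑ i, (α : Fin n → ℕ) i ≤ d := by
  have h := α.2
  simp only [expSet, Finset.mem_filter] at h
  exact h.2

lemma mono_smul (t : ℝ) (α : Fin n → ℕ) (x : Fin n → ℝ) :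
    mono α (fun i => t * x i) = t ^ (∑ i, α i) * mono α x := by
  simp [mono, mul_pow, Finset.prod_mul_distrib, Finset.prod_pow_eq_pow_sum]

lemma Fh_one (c : expSet n d → ℝ) (x : Fin n → ℝ) : Fh n d c (1, x) = polyD c x := by
  simp [Fh, polyD]

lemma Fh_zero (c : expSet n d → ℝ) (x : Fin n → ℝ) : Fh n d c (0, x) = topPartD c x := by
  unfold Fh topPartD
  refine Finset.sum_congr rfl fun α _ => ?_
  rcases eq_or_ne (∑ i, (α : Fin n → ℕ) i) d with h | h
  · simp [h]
  · have h1 : d - ∑ i, (α : Fin n → ℕ) i ≠ 0 := by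
      have := expSet_sum_le α; omega
    simp [h, zero_pow h1]

lemma Fh_scale (c : expSet n d → ℝ) (t : ℝ) (z : ℝ × (Fin n → ℝ)) :
    Fh n d c (t * z.1, fun i => t * z.2 i) = t ^ d * Fh n d c z := by
  unfold Fh
  rw [Finset.mul_sum]
  refine Finset.sum_congr rfl fun α _ => ?_
  rw [mono_smul, mul_pow]
  have key : t ^ (d - ∑ i, (α : Fin n → ℕ) i) * t ^ (∑ i, (α : Fin n → ℕ) i) = t ^ d := by
    rw [← pow_add, Nat.sub_add_cancel (expSet_sum_le α)]
  linear_combination (c α * z.1 ^ (d - ∑ i, (α : Fin n → ℕ) i) * mono (α : Fin n → ℕ) z.2) * key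

lemma homEval_one (p : MvPolynomial (Fin n) ℝ) (x : Fin n → ℝ) : homEval p 1 x = eval x p := by
  simp [homEval, eval_eq']

lemma finsuppSumEq (α : Fin n →₀ ℕ) : (α.sum fun _ e => e) = ∑ i, α i :=
  Finsupp.sum_fintype _ _ fun _ => rfl

lemma homEval_scale (p : MvPolynomial (Fin n) ℝ) (t x₀ : ℝ) (x : Fin n → ℝ) :
    homEval p (t * x₀) (fun i => t * x i) = t ^ p.totalDegree * homEval p x₀ x := by
  unfold homEval
  rw [Finset.mul_sum]
  refine Finset.sum_congr rfl fun α hα => ?_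
  have hle : (α.sum fun _ e => e) ≤ p.totalDegree := le_totalDegree hα
  have key : t ^ (p.totalDegree - (α.sum fun _ e => e)) * t ^ (α.sum fun _ e => e)
      = t ^ p.totalDegree := by
    rw [← pow_add, Nat.sub_add_cancel hle]
  have hm : (∏ i, (t * x i) ^ α i) = t ^ (α.sum fun _ e => e) * ∏ i, x i ^ α i := by
    rw [finsuppSumEq]
    simp [mul_pow, Finset.prod_mul_distrib, Finset.prod_pow_eq_pow_sum]
  rw [hm, mul_pow]
  linear_combination
    (p.coeff α * x₀ ^ (p.totalDegree - α.sum fun _ e => e) * ∏ i, x i ^ α i) * key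

lemma homEval_zero (p : MvPolynomial (Fin n) ℝ) (x : Fin n → ℝ) :
    homEval p 0 x = eval x (homogeneousComponent p.totalDegree p) := by
  rw [homogeneousComponent_apply, map_sum, Finset.sum_filter]
  unfold homEval
  refine Finset.sum_congr rfl fun α hα => ?_
  rw [eval_monomial, Finsupp.prod_pow]
  have hle : (α.sum fun _ e => e) ≤ p.totalDegree := le_totalDegree hα
  have hdeg : α.degree = α.sum fun _ e => e := rfl
  rcases eq_or_ne (α.sum fun _ e => e) p.totalDegree with h | h
  · simp [hdeg, h]
  · have h1 : p.totalDegree - (α.sum fun _ e => e) ≠ 0 := by omega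
    simp [hdeg, h, zero_pow h1]

lemma continuous_homEval (p : MvPolynomial (Fin n) ℝ) :
    Continuous fun z : ℝ × (Fin n → ℝ) => homEval p z.1 z.2 := by
  unfold homEval
  refine continuous_finset_sum _ fun α _ => ?_
  exact ((continuous_const.mul (continuous_fst.pow _)).mul
    (continuous_finset_prod _ fun i _ => ((continuous_apply i).comp continuous_snd).pow _))

lemma continuous_Fh (c : expSet n d → ℝ) :
    Continuous fun z : ℝ × (Fin n → ℝ) => Fh n d c z := by
  unfold Fh mono
  refine continuous_finset_sum _ fun α _ => ?_
  exact ((continuous_const.mul (continuous_fst.pow _)).mul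
    (continuous_finset_prod _ fun i _ => ((continuous_apply i).comp continuous_snd).pow _))

end Aux

section Aux2

variable {n d : ℕ} {ι : Type*}

lemma isClosed_tildeH (E I : Set ι) (g : ι → MvPolynomial (Fin n) ℝ) :
    IsClosed (tildeH E I g) := by
  have heq : tildeH E I g = {z : ℝ × (Fin n → ℝ) | 0 ≤ z.1} ∩
      ((⋂ i ∈ E, {z : ℝ × (Fin n → ℝ) | homEval (g i) z.1 z.2 = 0}) ∩
       (⋂ j ∈ I, {z : ℝ × (Fin n → ℝ) | 0 ≤ homEval (g j) z.1 z.2})) := by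
    ext z
    simp only [tildeH, Set.mem_setOf_eq, Set.mem_inter_iff, Set.mem_iInter]
  rw [heq]
  refine (isClosed_le continuous_const continuous_fst).inter (IsClosed.inter ?_ ?_)
  · exact isClosed_biInter fun i _ => isClosed_eq (continuous_homEval _) continuous_const
  · exact isClosed_biInter fun j _ => isClosed_le continuous_const (continuous_homEval _)

lemma isCompact_tildeK (E I : Set ι) (g : ι → MvPolynomial (Fin n) ℝ) :
    IsCompact (tildeK E I g) := by
  have hbig : IsCompact ((Set.Icc (-1:ℝ) 1) ×ˢ Set.pi Set.univ fun _ : Fin n => Set.Icc (-1:ℝ) 1) :=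
    isCompact_Icc.prod (isCompact_univ_pi fun _ => isCompact_Icc)
  refine hbig.of_isClosed_subset ?_ ?_
  · refine (isClosed_tildeH E I g).inter (isClosed_eq ?_ continuous_const)
    exact (continuous_fst.pow 2).add
      (continuous_finset_sum _ fun i _ => ((continuous_apply i).comp continuous_snd).pow 2)
  · rintro z ⟨_, hsph⟩
    simp only [Set.mem_setOf_eq] at hsph
    have hsum : (0:ℝ) ≤ ∑ i, z.2 i ^ 2 := Finset.sum_nonneg fun i _ => sq_nonneg _
    have h1 : z.1 ^ 2 ≤ 1 := by linarith
    constructor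
    · have := abs_le_one_iff_mul_self_le_one.mpr (by nlinarith : z.1 * z.1 ≤ 1)
      exact Set.mem_Icc.mpr (abs_le.mp this)
    · intro i _
      have h2 : z.2 i ^ 2 ≤ ∑ j, z.2 j ^ 2 :=
        Finset.single_le_sum (f := fun j => z.2 j ^ 2) (fun j _ => sq_nonneg _) (Finset.mem_univ i)
      have h3 : z.2 i ^ 2 ≤ 1 := by nlinarith [sq_nonneg z.1]
      have := abs_le_one_iff_mul_self_le_one.mpr (by nlinarith : z.2 i * z.2 i ≤ 1)
      exact Set.mem_Icc.mpr (abs_le.mp this)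

lemma isOpen_S (E I : Set ι) (g : ι → MvPolynomial (Fin n) ℝ) :
    IsOpen {c : expSet n d → ℝ | ∀ z ∈ tildeK E I g, 0 < Fh n d c z} := by
  rw [← isClosed_compl_iff]
  haveI : CompactSpace (tildeK E I g) := isCompact_iff_compactSpace.mp (isCompact_tildeK E I g)
  have himg : {c : expSet n d → ℝ | ∀ z ∈ tildeK E I g, 0 < Fh n d c z}ᶜ =
      Prod.snd '' {p : tildeK E I g × (expSet n d → ℝ) |
        Fh n d p.2 (p.1 : ℝ × (Fin n → ℝ)) ≤ 0} := by
    ext c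
    simp only [Set.mem_compl_iff, Set.mem_setOf_eq, Set.mem_image, not_forall, not_lt]
    constructor
    · rintro ⟨z, hz, hle⟩
      exact ⟨(⟨z, hz⟩, c), hle, rfl⟩
    · rintro ⟨⟨z, c'⟩, hle, rfl⟩
      exact ⟨z, z.2, hle⟩
  rw [himg]
  apply isClosedMap_snd_of_compactSpace
  apply isClosed_le ?_ continuous_const
  have h1 : Continuous fun p : tildeK E I g × (expSet n d → ℝ) => (p.1 : ℝ × (Fin n → ℝ)) :=
    continuous_subtype_val.comp continuous_fst
  unfold Fh mono
  refine continuous_finset_sum _ fun α _ => ?_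
  exact (((continuous_apply α).comp continuous_snd).mul ((continuous_fst.comp h1).pow _)).mul
    (continuous_finset_prod _ fun i _ => (((continuous_apply i).comp (continuous_snd.comp h1))).pow _)

lemma eval_of_homEval {p : MvPolynomial (Fin n) ℝ} {t : ℝ} (ht : t ≠ 0) (w : Fin n → ℝ) :
    homEval p t w = t ^ p.totalDegree * eval (fun i => w i / t) p := by
  have h2 : (fun i => t * (w i / t)) = w := by funext i; field_simp
  have h := homEval_scale p t 1 (fun i => w i / t)
  rw [homEval_one, mul_one, h2] at h
  exact h

lemma Fh_eq_scale {c : expSet n d → ℝ} {t : ℝ} (ht : t ≠ 0) (w : Fin n → ℝ) :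
    Fh n d c (t, w) = t ^ d * polyD c (fun i => w i / t) := by
  have h2 : (fun i => t * (w i / t)) = w := by funext i; field_simp
  have h := Fh_scale c t (1, fun i => w i / t)
  rw [Fh_one] at h
  simpa [h2] using h

lemma mem_semiSet_of_tildeC {E I : Set ι} {g : ι → MvPolynomial (Fin n) ℝ}
    {w : ℝ × (Fin n → ℝ)} (hw : w ∈ tildeC E I g) :
    (fun i => w.2 i / w.1) ∈ semiSet E I g := by
  obtain ⟨hw1, hwE, hwI⟩ := hw
  have htne : w.1 ≠ 0 := ne_of_gt hw1
  constructor
  · intro i hi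
    have h := eval_of_homEval (p := g i) htne w.2
    rw [hwE i hi] at h
    exact ((mul_eq_zero.mp h.symm).resolve_left (pow_ne_zero _ htne))
  · intro j hj
    have h := eval_of_homEval (p := g j) htne w.2
    have h0 := hwI j hj
    rw [h] at h0
    have hp : (0:ℝ) < w.1 ^ (g j).totalDegree := pow_pos hw1 _
    nlinarith [h0, hp]

lemma scaled_mem_tildeH {E I : Set ι} {g : ι → MvPolynomial (Fin n) ℝ} {x : Fin n → ℝ}
    (hx : x ∈ semiSet E I g) {t : ℝ} (ht : 0 < t) :
    ((t, fun i => t * x i) : ℝ × (Fin n → ℝ)) ∈ tildeH E I g := by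
  refine ⟨ht.le, fun i hi => ?_, fun j hj => ?_⟩
  · have h := homEval_scale (g i) t 1 x
    rw [homEval_one, mul_one] at h
    show homEval (g i) t (fun i => t * x i) = 0
    rw [h, hx.1 i hi, mul_zero]
  · have h := homEval_scale (g j) t 1 x
    rw [homEval_one, mul_one] at h
    show 0 ≤ homEval (g j) t (fun i => t * x i)
    rw [h]
    exact mul_nonneg (pow_nonneg ht.le _) (hx.2 j hj)

lemma mem_tildeK_scaled {E I : Set ι} {g : ι → MvPolynomial (Fin n) ℝ} {x : Fin n → ℝ}
    (hx : x ∈ semiSet E I g) :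
    (((Real.sqrt (1 + ∑ i, x i ^ 2))⁻¹,
      fun i => (Real.sqrt (1 + ∑ i, x i ^ 2))⁻¹ * x i) : ℝ × (Fin n → ℝ)) ∈ tildeK E I g := by
  set r := Real.sqrt (1 + ∑ i, x i ^ 2) with hrdef
  have h1 : (0:ℝ) < 1 + ∑ i, x i ^ 2 := by positivity
  have hrpos : 0 < r := Real.sqrt_pos.mpr h1
  have hr2 : r ^ 2 = 1 + ∑ i, x i ^ 2 := Real.sq_sqrt h1.le
  refine ⟨scaled_mem_tildeH hx (inv_pos.mpr hrpos), ?_⟩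
  show (r⁻¹) ^ 2 + ∑ i, (r⁻¹ * x i) ^ 2 = 1
  have hsum : ∑ i, (r⁻¹ * x i) ^ 2 = r⁻¹ ^ 2 * ∑ i, x i ^ 2 := by
    rw [Finset.mul_sum]
    exact Finset.sum_congr rfl fun i _ => by ring
  have hrne : r ≠ 0 := ne_of_gt hrpos
  rw [hsum]
  field_simp
  linarith [hr2]

lemma zero_mem_expSet : (fun _ => 0 : Fin n → ℕ) ∈ expSet n d := by
  simp [expSet, Fintype.mem_piFinset]

lemma single_mem_expSet (i : Fin n) : (fun j => if j = i then d else 0) ∈ expSet n d := by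
  simp only [expSet, Finset.mem_filter, Fintype.mem_piFinset, Finset.mem_range]
  constructor
  · intro j; split <;> omega
  · rw [Finset.sum_ite_eq' Finset.univ i fun _ => d]
    simp

lemma Fh_single (α₀ : expSet n d) (z : ℝ × (Fin n → ℝ)) :
    Fh n d (Pi.single α₀ 1) z
      = z.1 ^ (d - ∑ i, (α₀ : Fin n → ℕ) i) * mono (α₀ : Fin n → ℕ) z.2 := by
  classical
  unfold Fh
  rw [Finset.sum_eq_single α₀]
  · simp
  · intro β _ hβ
    rw [Pi.single_eq_of_ne hβ, zero_mul, zero_mul]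
  · intro h; exact absurd (Finset.mem_univ α₀) h

lemma Fh_smul (v : ℝ) (c : expSet n d → ℝ) (z : ℝ × (Fin n → ℝ)) :
    Fh n d (v • c) z = v * Fh n d c z := by
  unfold Fh
  rw [Finset.mul_sum]
  exact Finset.sum_congr rfl fun α _ => by simp; ring

lemma Fh_sub (c e : expSet n d → ℝ) (z : ℝ × (Fin n → ℝ)) :
    Fh n d (c - e) z = Fh n d c z - Fh n d e z := by
  unfold Fh
  rw [← Finset.sum_sub_distrib]
  exact Finset.sum_congr rfl fun α _ => by simp; ring

lemma exists_single_ne {z : ℝ × (Fin n → ℝ)} (hz1 : 0 ≤ z.1)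
    (hsph : z.1 ^ 2 + ∑ i, z.2 i ^ 2 = 1) :
    ∃ α₀ : expSet n d, Fh n d (Pi.single α₀ 1) z ≠ 0 := by
  classical
  rcases eq_or_lt_of_le hz1 with h0 | hpos
  · have hsum : ∑ i, z.2 i ^ 2 = 1 := by rw [← h0] at hsph; simpa using hsph
    have hex : ∃ i, z.2 i ≠ 0 := by
      by_contra h
      push_neg at h
      simp [h] at hsum
    obtain ⟨i, hi⟩ := hex
    refine ⟨⟨fun j => if j = i then d else 0, single_mem_expSet i⟩, ?_⟩
    rw [Fh_single]
    have hsum' : ∑ j, (if j = i then d else 0) = d := by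
      rw [Finset.sum_ite_eq' Finset.univ i fun _ => d]; simp
    have hmono : mono (fun j => if j = i then d else 0) z.2 = z.2 i ^ d := by
      unfold mono
      have hpt : ∀ j, z.2 j ^ (if j = i then d else 0) = if j = i then z.2 j ^ d else 1 :=
        fun j => by split <;> simp
      simp only [hpt]
      rw [Finset.prod_ite_eq' Finset.univ i fun j => z.2 j ^ d]
      simp
    show z.1 ^ (d - ∑ j, (if j = i then d else 0)) * mono (fun j => if j = i then d else 0) z.2 ≠ 0
    rw [hsum', Nat.sub_self, pow_zero, one_mul, hmono]
    exact pow_ne_zero _ hi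
  · refine ⟨⟨fun _ => 0, zero_mem_expSet⟩, ?_⟩
    rw [Fh_single]
    show z.1 ^ (d - ∑ _j : Fin n, 0) * mono (fun _ => 0) z.2 ≠ 0
    have : mono (fun _ => 0 : Fin n → ℕ) z.2 = 1 := by simp [mono]
    rw [this, mul_one]
    simpa using pow_ne_zero (d - ∑ _j : Fin n, 0) (ne_of_gt hpos)

lemma Fh_nonneg_on_tildeH {E I : Set ι} {g : ι → MvPolynomial (Fin n) ℝ}
    (hinf : closedAtInfty E I g) {c : expSet n d → ℝ}
    (hc : ∀ x ∈ semiSet E I g, 0 ≤ polyD c x) :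
    ∀ z ∈ tildeH E I g, 0 ≤ Fh n d c z := by
  intro z hz
  have hsub : tildeC E I g ⊆ {z | 0 ≤ Fh n d c z} := by
    rintro w hw
    have hxK := mem_semiSet_of_tildeC hw
    have htne : w.1 ≠ 0 := ne_of_gt hw.1
    have hfe : Fh n d c (w.1, w.2) = w.1 ^ d * polyD c (fun i => w.2 i / w.1) :=
      Fh_eq_scale htne w.2
    show 0 ≤ Fh n d c w
    rw [show w = (w.1, w.2) from rfl, hfe]
    exact mul_nonneg (pow_nonneg hw.1.le _) (hc _ hxK)
  have hcl : closure (tildeC E I g) ⊆ {z | 0 ≤ Fh n d c z} :=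
    closure_minimal hsub (isClosed_le continuous_const (continuous_Fh c))
  rw [closedAtInfty] at hinf
  rw [← hinf] at hz
  exact hcl hz


end Aux2

set_option maxHeartbeats 1000000 in
/-- if `K` is closed at infinity and `d > 0`, then
`int(P_d(K)) = {p ∈ ℝ[x]_d : p > 0 on K and p^{(d)} > 0 on K^e}`. -/
theorem stmt10 {n d : ℕ} {ι : Type*} (E I : Set ι) (g : ι → MvPolynomial (Fin n) ℝ)
    (hd : 0 < d) (hinf : closedAtInfty E I g) :
    interior {c : expSet n d → ℝ | ∀ x ∈ semiSet E I g, 0 ≤ polyD c x} =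
      {c : expSet n d → ℝ |
        (∀ x ∈ semiSet E I g, 0 < polyD c x) ∧ ∀ x ∈ dirSet E I g, 0 < topPartD c x} := by

  classical
  have hSR : {c : expSet n d → ℝ | ∀ z ∈ tildeK E I g, 0 < Fh n d c z} =
      {c : expSet n d → ℝ |
        (∀ x ∈ semiSet E I g, 0 < polyD c x) ∧ ∀ x ∈ dirSet E I g, 0 < topPartD c x} := by
    ext c
    simp only [Set.mem_setOf_eq]
    constructor
    · intro hc
      constructor
      · intro x hx
        have hz := mem_tildeK_scaled hx
        have h := hc _ hz
        set r := Real.sqrt (1 + ∑ i, x i ^ 2) with hrdef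
        have h1 : (0:ℝ) < 1 + ∑ i, x i ^ 2 := by positivity
        have hrpos : 0 < r := Real.sqrt_pos.mpr h1
        have htpos : 0 < r⁻¹ := inv_pos.mpr hrpos
        rw [Fh_eq_scale (ne_of_gt htpos)] at h
        have harg : (fun i => (r⁻¹ * x i) / r⁻¹) = x := by
          funext i; field_simp
        rw [harg] at h
        nlinarith [pow_pos htpos d, h]
      · intro x hx
        have hz : (((0:ℝ), x) : ℝ × (Fin n → ℝ)) ∈ tildeK E I g := by
          refine ⟨⟨le_refl 0, fun i hi => ?_, fun j hj => ?_⟩, ?_⟩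
          · show homEval (g i) 0 x = 0
            rw [homEval_zero]; exact hx.1 i hi
          · show 0 ≤ homEval (g j) 0 x
            rw [homEval_zero]; exact hx.2.1 j hj
          · show (0:ℝ) ^ 2 + ∑ i, x i ^ 2 = 1
            rw [hx.2.2]; ring
        have h := hc _ hz
        rwa [Fh_zero] at h
    · rintro ⟨hKpos, hdir⟩ z hz
      obtain ⟨⟨hz1, hzE, hzI⟩, hsph⟩ := hz
      simp only [Set.mem_setOf_eq] at hsph
      rcases eq_or_lt_of_le hz1 with h0 | hpos
      · have hxdir : z.2 ∈ dirSet E I g := by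
          refine ⟨fun i hi => ?_, fun j hj => ?_, ?_⟩
          · rw [← homEval_zero]
            have h := hzE i hi; rw [← h0] at h; exact h
          · rw [← homEval_zero]
            have h := hzI j hj; rw [← h0] at h; exact h
          · rw [← h0] at hsph; simpa using hsph
        have hfz : Fh n d c z = topPartD c z.2 := by
          rw [show z = (z.1, z.2) from rfl, ← h0, Fh_zero]
        rw [hfz]
        exact hdir _ hxdir
      · have hw : z ∈ tildeC E I g := ⟨hpos, hzE, hzI⟩
        have hxK := mem_semiSet_of_tildeC hw
        have hfe := Fh_eq_scale (c := c) (ne_of_gt hpos) z.2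
        rw [show z = (z.1, z.2) from rfl, hfe]
        exact mul_pos (pow_pos hpos d) (hKpos _ hxK)
  have hS1 : ∀ c : expSet n d → ℝ, (∀ z ∈ tildeK E I g, 0 < Fh n d c z) →
      ∀ x ∈ semiSet E I g, 0 ≤ polyD c x := by
    intro c hc x hx
    have h := (Set.ext_iff.mp hSR c).mp hc
    exact (h.1 x hx).le
  have hPS : interior {c : expSet n d → ℝ | ∀ x ∈ semiSet E I g, 0 ≤ polyD c x}
      = {c : expSet n d → ℝ | ∀ z ∈ tildeK E I g, 0 < Fh n d c z} := by
    apply Set.Subset.antisymm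
    · intro c hc
      intro z hz
      obtain ⟨α₀, hα₀⟩ := exists_single_ne (d := d) hz.1.1 hz.2
      set v := Fh n d (Pi.single α₀ 1) z with hvdef
      set e : expSet n d → ℝ := v • (Pi.single α₀ (1:ℝ) : expSet n d → ℝ) with hedef
      have hcont : Continuous fun δ : ℝ => c - δ • e :=
        continuous_const.sub (continuous_id.smul continuous_const)
      have hnhds : ∀ᶠ δ in nhds (0:ℝ),
          (c - δ • e) ∈ interior {c : expSet n d → ℝ | ∀ x ∈ semiSet E I g, 0 ≤ polyD c x} := by
        have hmem : interior {c : expSet n d → ℝ | ∀ x ∈ semiSet E I g, 0 ≤ polyD c x}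
            ∈ nhds ((fun δ : ℝ => c - δ • e) 0) := by
          simp only [zero_smul, sub_zero]
          exact isOpen_interior.mem_nhds hc
        exact hcont.continuousAt.preimage_mem_nhds hmem
      have h2 := hnhds.filter_mono (nhdsWithin_le_nhds (s := Set.Ioi (0:ℝ)))
      have h3 : ∀ᶠ δ in nhdsWithin (0:ℝ) (Set.Ioi 0), 0 < δ :=
        eventually_mem_nhdsWithin.mono fun δ hδ => hδ
      obtain ⟨δ, hδP, hδpos⟩ := (h2.and h3).exists
      have hnn := Fh_nonneg_on_tildeH hinf (interior_subset hδP) z hz.1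
      rw [Fh_sub] at hnn
      have hfe : Fh n d (δ • e) z = δ * (v * v) := by
        rw [hedef, smul_smul, Fh_smul, ← hvdef]; ring
      have hvpos : 0 < v * v := mul_self_pos.mpr hα₀
      rw [hfe] at hnn
      nlinarith [mul_pos hδpos hvpos]
    · exact interior_maximal (fun c hc => hS1 c hc) (isOpen_S E I g)
  rw [hPS, hSR]
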